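/- Let d ≥ 1, let a_{−d},…,a_d ∈ ℂ with a_{−k} = conj(a_k) and a_d ≠ 0, let b : ℤ → ℝ be bounded, define L on ℓ²(ℤ,ℂ) by (Lu)(n) = Σ_{k=−d}^d a_k u(n+k) + b(n)u(n), and let E ∈ ℝ. If u, v ∈ ℓ²(ℤ,ℂ) satisfy Lu = Eu and Lv = Ev, then the vectors (ū(1), ū(0)) and (v̄(1), v̄(0)) in ℂ^{2d} are symplectically orthogonal with respect to S = [[0, −C*],[C, 0]]: explicitly, −ū(1)* C* v̄(0) + ū(0)* C v̄(1) = 0, where x* denotes the conjugate transpose. -/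

import Mathlib

open scoped Real
open Filter Matrix

noncomputable section


/-- The vector `ū(m) = (u(md+d-1), u(md+d-2), …, u(md)) ∈ ℂ^d`. -/
def vecSeg (d : ℕ) (u : ℤ → ℂ) (m : ℤ) : Fin d → ℂ :=
  fun i => u (m * d + ((d : ℤ) - 1) - (i : ℕ))

/-- The `d × d` upper-triangular Toeplitz matrix with first row `(a d, a (d-1), …, a 1)`. -/
def toeplitzC (d : ℕ) (a : ℤ → ℂ) : Matrix (Fin d) (Fin d) ℂ :=
  fun i j => if (i : ℕ) ≤ (j : ℕ) then a ((d : ℤ) - (j : ℕ) + (i : ℕ)) else 0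

section Aux

lemma sum_shift (f : ℤ → ℂ) (N : ℤ) (m : ℕ) :
    ∑ j ∈ Finset.range m, f (N + 1 - (j : ℤ)) - ∑ j ∈ Finset.range m, f (N - (j : ℤ))
      = f (N + 1) - f (N + 1 - (m : ℤ)) := by
  have h : ∀ j : ℕ, f (N - (j : ℤ)) = (fun j : ℕ => f (N + 1 - (j : ℤ))) (j + 1) := by
    intro j; simp only; congr 1; push_cast; ring
  calc ∑ j ∈ Finset.range m, f (N + 1 - (j : ℤ)) - ∑ j ∈ Finset.range m, f (N - (j : ℤ))
      = ∑ j ∈ Finset.range m, (fun j : ℕ => f (N + 1 - (j : ℤ))) j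
        - ∑ j ∈ Finset.range m, (fun j : ℕ => f (N + 1 - (j : ℤ))) (j + 1) := by
        rw [Finset.sum_congr rfl (fun j _ => h j)]
    _ = f (N + 1) - f (N + 1 - (m : ℤ)) := by
        have h1 := Finset.sum_range_succ (fun j : ℕ => f (N + 1 - (j : ℤ))) m
        have h2 := Finset.sum_range_succ' (fun j : ℕ => f (N + 1 - (j : ℤ))) m
        simp only at h1 h2 ⊢
        rw [← sub_eq_iff_eq_add] at h1 h2
        rw [← h1, ← h2]
        simp only [Nat.cast_zero, sub_zero]
        ring

lemma split_sym (d : ℕ) (f : ℤ → ℂ) :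
    ∑ k ∈ Finset.Icc (-(d:ℤ)) (d:ℤ), f k
      = f 0 + ∑ k ∈ Finset.Icc (1:ℤ) (d:ℤ), (f k + f (-k)) := by
  induction d with
  | zero => simp
  | succ d ih =>
      have e1 : Finset.Icc (-((d:ℤ)+1)) ((d:ℤ)+1)
          = insert (-((d:ℤ)+1)) (insert (((d:ℤ)+1)) (Finset.Icc (-(d:ℤ)) (d:ℤ))) := by
        ext x; simp only [Finset.mem_Icc, Finset.mem_insert]; omega
      have e2 : Finset.Icc (1:ℤ) ((d:ℤ)+1) = insert (((d:ℤ)+1)) (Finset.Icc (1:ℤ) (d:ℤ)) := by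
        ext x; simp only [Finset.mem_Icc, Finset.mem_insert]; omega
      push_cast
      rw [e1, e2, Finset.sum_insert (by simp only [Finset.mem_Icc, Finset.mem_insert]; omega),
        Finset.sum_insert (by simp only [Finset.mem_Icc]; omega),
        Finset.sum_insert (by simp only [Finset.mem_Icc]; omega), ih]
      ring

noncomputable def Jfun (d : ℕ) (a u v : ℤ → ℂ) (N : ℤ) : ℂ :=
  ∑ k ∈ Finset.Icc (1:ℤ) (d:ℤ),
    (a k * ∑ j ∈ Finset.range k.toNat, star (u (N - (j:ℤ))) * v (N - (j:ℤ) + k)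
     - star (a k) * ∑ j ∈ Finset.range k.toNat, star (u (N - (j:ℤ) + k)) * v (N - (j:ℤ)))

lemma Jstep (d : ℕ) (a : ℤ → ℂ) (haconj : ∀ k : ℤ, a (-k) = star (a k))
    (b : ℤ → ℝ) (E : ℝ) (u v : ℤ → ℂ)
    (hLu : ∀ n : ℤ,
      (∑ k ∈ Finset.Icc (-(d:ℤ)) (d:ℤ), a k * u (n + k)) + (b n : ℂ) * u n = (E : ℂ) * u n)
    (hLv : ∀ n : ℤ,
      (∑ k ∈ Finset.Icc (-(d:ℤ)) (d:ℤ), a k * v (n + k)) + (b n : ℂ) * v n = (E : ℂ) * v n)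
    (N : ℤ) : Jfun d a u v (N + 1) = Jfun d a u v N := by
  set M := N + 1 with hM
  have ha0 : a 0 = star (a 0) := by rw [← haconj 0, neg_zero]
  -- per-k difference identity
  have main : ∀ k ∈ Finset.Icc (1:ℤ) (d:ℤ),
      ((a k * ∑ j ∈ Finset.range k.toNat, star (u (M - (j:ℤ))) * v (M - (j:ℤ) + k)
        - star (a k) * ∑ j ∈ Finset.range k.toNat, star (u (M - (j:ℤ) + k)) * v (M - (j:ℤ)))
       - (a k * ∑ j ∈ Finset.range k.toNat, star (u (N - (j:ℤ))) * v (N - (j:ℤ) + k)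
        - star (a k) * ∑ j ∈ Finset.range k.toNat, star (u (N - (j:ℤ) + k)) * v (N - (j:ℤ))))
      = star (u M) * (a k * v (M + k) + star (a k) * v (M - k))
        - (star (a k) * star (u (M + k)) + a k * star (u (M - k))) * v M := by
    intro k hk
    simp only [Finset.mem_Icc] at hk
    have hk1 : ((k.toNat : ℤ)) = k := by omega
    have h1 := sum_shift (fun n : ℤ => star (u n) * v (n + k)) N k.toNat
    have h2 := sum_shift (fun n : ℤ => star (u (n + k)) * v n) N k.toNat
    simp only [hk1] at h1 h2
    rw [← hM] at h1 h2
    have e1 : M - k + k = M := by ring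
    simp only [e1] at h1 h2
    linear_combination a k * h1 - star (a k) * h2
  have key_v : ∑ k ∈ Finset.Icc (-(d:ℤ)) (d:ℤ), a k * v (M + k) = ((E:ℂ) - (b M : ℂ)) * v M := by
    linear_combination hLv M
  have key_u : ∑ k ∈ Finset.Icc (-(d:ℤ)) (d:ℤ), a k * u (M + k) = ((E:ℂ) - (b M : ℂ)) * u M := by
    linear_combination hLu M
  have hv' : ∑ k ∈ Finset.Icc (1:ℤ) (d:ℤ), (a k * v (M + k) + star (a k) * v (M - k))
      = ((E:ℂ) - (b M : ℂ)) * v M - a 0 * v M := by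
    have h := split_sym d (fun k => a k * v (M + k))
    rw [key_v] at h
    have h3 : ∑ k ∈ Finset.Icc (1:ℤ) (d:ℤ), (a k * v (M + k) + a (-k) * v (M + -k))
        = ∑ k ∈ Finset.Icc (1:ℤ) (d:ℤ), (a k * v (M + k) + star (a k) * v (M - k)) :=
      Finset.sum_congr rfl (fun k _ => by rw [haconj, sub_eq_add_neg])
    rw [h3] at h
    simp only [add_zero] at h
    linear_combination -h
  have hu' : ∑ k ∈ Finset.Icc (1:ℤ) (d:ℤ), (star (a k) * star (u (M + k)) + a k * star (u (M - k)))
      = ((E:ℂ) - (b M : ℂ)) * star (u M) - a 0 * star (u M) := by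
    have h := split_sym d (fun k => a k * u (M + k))
    rw [key_u] at h
    have h' := congrArg (starRingEnd ℂ) h
    simp only [map_add, map_sum, _root_.map_mul, map_sub, Complex.conj_ofReal,
      ← Complex.star_def] at h'
    have h3 : ∑ k ∈ Finset.Icc (1:ℤ) (d:ℤ),
          (star (a k) * star (u (M + k)) + star (a (-k)) * star (u (M + -k)))
        = ∑ k ∈ Finset.Icc (1:ℤ) (d:ℤ),
          (star (a k) * star (u (M + k)) + a k * star (u (M - k))) :=
      Finset.sum_congr rfl (fun k _ => by rw [haconj, star_star, sub_eq_add_neg])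
    rw [h3, ← ha0] at h'
    simp only [add_zero] at h'
    linear_combination -h'
  have expand : Jfun d a u v M - Jfun d a u v N
      = ∑ k ∈ Finset.Icc (1:ℤ) (d:ℤ),
        (star (u M) * (a k * v (M + k) + star (a k) * v (M - k))
          - (star (a k) * star (u (M + k)) + a k * star (u (M - k))) * v M) := by
    rw [Jfun, Jfun, ← Finset.sum_sub_distrib]
    exact Finset.sum_congr rfl main
  have expand2 : Jfun d a u v M - Jfun d a u v N
      = star (u M) * (∑ k ∈ Finset.Icc (1:ℤ) (d:ℤ), (a k * v (M + k) + star (a k) * v (M - k)))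
        - (∑ k ∈ Finset.Icc (1:ℤ) (d:ℤ),
            (star (a k) * star (u (M + k)) + a k * star (u (M - k)))) * v M := by
    rw [expand, Finset.sum_sub_distrib, ← Finset.mul_sum, ← Finset.sum_mul]
  rw [hv', hu'] at expand2
  have : Jfun d a u v M - Jfun d a u v N = 0 := by rw [expand2]; ring
  exact sub_eq_zero.mp this

lemma tendsto_zero_of_sq_summable {w : ℤ → ℂ} (hw : Summable fun n : ℤ => ‖w n‖ ^ 2) :
    Tendsto w atTop (nhds 0) := by
  have h1 : Tendsto (fun n : ℤ => ‖w n‖ ^ 2) cofinite (nhds 0) := hw.tendsto_cofinite_zero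
  have hle : (atTop : Filter ℤ) ≤ cofinite := atTop_le_cofinite
  have h2 : Tendsto (fun n : ℤ => ‖w n‖ ^ 2) atTop (nhds 0) := h1.mono_left hle
  have h3 : Tendsto (fun n : ℤ => Real.sqrt (‖w n‖ ^ 2)) atTop (nhds (Real.sqrt 0)) :=
    (Real.continuous_sqrt.tendsto 0).comp h2
  have h4 : Tendsto (fun n : ℤ => ‖w n‖) atTop (nhds 0) := by
    simpa [Real.sqrt_sq, norm_nonneg] using h3
  exact tendsto_zero_iff_norm_tendsto_zero.mpr h4

lemma Jtendsto (d : ℕ) (a : ℤ → ℂ) (u v : ℤ → ℂ)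
    (hu : Tendsto u atTop (nhds 0)) (hv : Tendsto v atTop (nhds 0)) :
    Tendsto (fun N : ℤ => Jfun d a u v N) atTop (nhds 0) := by
  have base : ∀ (c : ℤ) (w : ℤ → ℂ), Tendsto w atTop (nhds 0) →
      Tendsto (fun N : ℤ => w (N + c)) atTop (nhds 0) := by
    intro c w hw
    exact hw.comp (tendsto_atTop_add_const_right atTop c tendsto_id)
  have starbase : ∀ (c : ℤ), Tendsto (fun N : ℤ => star (u (N + c))) atTop (nhds 0) := by
    intro c
    have := (base c u hu)
    rw [tendsto_zero_iff_norm_tendsto_zero] at this ⊢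
    simpa using this
  have hterm : ∀ (c c' : ℤ),
      Tendsto (fun N : ℤ => star (u (N + c)) * v (N + c')) atTop (nhds 0) := by
    intro c c'
    simpa using (starbase c).mul (base c' v hv)
  unfold Jfun
  have h0 : (0 : ℂ) = ∑ k ∈ Finset.Icc (1:ℤ) (d:ℤ), (0 : ℂ) := by simp
  rw [h0]
  apply tendsto_finset_sum
  intro k _
  have hA : Tendsto (fun N : ℤ =>
      ∑ j ∈ Finset.range k.toNat, star (u (N - (j:ℤ))) * v (N - (j:ℤ) + k)) atTop (nhds 0) := by
    have h0 : (0 : ℂ) = ∑ j ∈ Finset.range k.toNat, (0 : ℂ) := by simp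
    rw [h0]
    apply tendsto_finset_sum
    intro j _
    have := hterm (-(j:ℤ)) (-(j:ℤ) + k)
    simpa [sub_eq_add_neg, add_assoc] using this
  have hB : Tendsto (fun N : ℤ =>
      ∑ j ∈ Finset.range k.toNat, star (u (N - (j:ℤ) + k)) * v (N - (j:ℤ))) atTop (nhds 0) := by
    have h0 : (0 : ℂ) = ∑ j ∈ Finset.range k.toNat, (0 : ℂ) := by simp
    rw [h0]
    apply tendsto_finset_sum
    intro j _
    have := hterm (-(j:ℤ) + k) (-(j:ℤ))
    simpa [sub_eq_add_neg, add_assoc] using this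
  have := ((tendsto_const_nhds (x := a k)).mul hA).sub
    ((tendsto_const_nhds (x := star (a k))).mul hB)
  simpa using this

lemma Jzero (d : ℕ) (a : ℤ → ℂ) (haconj : ∀ k : ℤ, a (-k) = star (a k))
    (b : ℤ → ℝ) (E : ℝ) (u v : ℤ → ℂ)
    (hu2 : Summable fun n : ℤ => ‖u n‖ ^ 2)
    (hv2 : Summable fun n : ℤ => ‖v n‖ ^ 2)
    (hLu : ∀ n : ℤ,
      (∑ k ∈ Finset.Icc (-(d:ℤ)) (d:ℤ), a k * u (n + k)) + (b n : ℂ) * u n = (E : ℂ) * u n)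
    (hLv : ∀ n : ℤ,
      (∑ k ∈ Finset.Icc (-(d:ℤ)) (d:ℤ), a k * v (n + k)) + (b n : ℂ) * v n = (E : ℂ) * v n)
    (N₀ : ℤ) : Jfun d a u v N₀ = 0 := by
  have hconst : ∀ n : ℕ, Jfun d a u v (N₀ + n) = Jfun d a u v N₀ := by
    intro n
    induction n with
    | zero => simp
    | succ n ih =>
        have : N₀ + ((n : ℤ) + 1) = (N₀ + n) + 1 := by ring
        push_cast
        rw [this, Jstep d a haconj b E u v hLu hLv, ih]
  have hmap : Tendsto (fun n : ℕ => N₀ + (n : ℤ)) atTop atTop :=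
    tendsto_atTop_add_const_left atTop N₀ tendsto_natCast_atTop_atTop
  have h1 : Tendsto (fun n : ℕ => Jfun d a u v (N₀ + n)) atTop (nhds 0) :=
    (Jtendsto d a u v (tendsto_zero_of_sq_summable hu2)
      (tendsto_zero_of_sq_summable hv2)).comp hmap
  have h2 : Tendsto (fun n : ℕ => Jfun d a u v (N₀ + n)) atTop (nhds (Jfun d a u v N₀)) := by
    simp only [hconst]; exact tendsto_const_nhds
  exact tendsto_nhds_unique h2 h1

lemma partA (d : ℕ) (a u v : ℤ → ℂ) :
    star (vecSeg d u 0) ⬝ᵥ (toeplitzC d a *ᵥ vecSeg d v 1)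
      = ∑ k ∈ Finset.Icc (1:ℤ) (d:ℤ), a k *
          ∑ j ∈ Finset.range k.toNat,
            star (u ((d:ℤ) - 1 - (j:ℤ))) * v ((d:ℤ) - 1 - (j:ℤ) + k) := by
  simp only [dotProduct, Matrix.mulVec, Pi.star_apply, vecSeg, toeplitzC,
    ite_mul, zero_mul, Finset.mul_sum, mul_ite, mul_zero]
  rw [← Finset.sum_product']
  rw [← Finset.sum_filter]
  rw [Finset.sum_sigma']
  refine Finset.sum_bij' (fun p hp => (⟨(d:ℤ) - (p.2 : ℕ) + (p.1 : ℕ), (p.1 : ℕ)⟩ : Σ _ : ℤ, ℕ))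
    (fun q hq => ((⟨q.2, ?_⟩ : Fin d), (⟨d - q.1.toNat + q.2, ?_⟩ : Fin d))) ?_ ?_ ?_ ?_ ?_
  · simp only [Finset.mem_sigma, Finset.mem_Icc, Finset.mem_range] at hq
    omega
  · simp only [Finset.mem_sigma, Finset.mem_Icc, Finset.mem_range] at hq
    omega
  · intro p hp
    simp only [Finset.mem_filter, Finset.mem_product] at hp
    simp only [Finset.mem_sigma, Finset.mem_Icc, Finset.mem_range]
    have h1 := p.1.isLt
    have h2 := p.2.isLt
    omega
  · intro q hq
    simp only [Finset.mem_sigma, Finset.mem_Icc, Finset.mem_range] at hq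
    simp only [Finset.mem_filter, Finset.mem_product, Finset.mem_univ, true_and]
    omega
  · intro p hp
    simp only [Finset.mem_filter, Finset.mem_product] at hp
    have h1 := p.1.isLt
    have h2 := p.2.isLt
    ext <;> simp <;> omega
  · intro q hq
    simp only [Finset.mem_sigma, Finset.mem_Icc, Finset.mem_range] at hq
    ext <;> simp <;> omega
  · intro p hp
    simp only [Finset.mem_filter, Finset.mem_product] at hp
    have h1 := p.1.isLt
    have h2 := p.2.isLt
    dsimp only
    have e1 : (0:ℤ) + ((d:ℤ) - 1) - (p.1 : ℕ) = (d:ℤ) - 1 - ((p.1:ℕ) : ℤ) := by ring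
    have e2 : (1:ℤ) * d + ((d:ℤ) - 1) - (p.2 : ℕ)
        = (d:ℤ) - 1 - ((p.1:ℕ) : ℤ) + ((d:ℤ) - (p.2 : ℕ) + (p.1 : ℕ)) := by ring
    rw [e1, e2]
    ring

lemma partB (d : ℕ) (a u v : ℤ → ℂ) :
    star (vecSeg d u 1) ⬝ᵥ ((toeplitzC d a)ᴴ *ᵥ vecSeg d v 0)
      = ∑ k ∈ Finset.Icc (1:ℤ) (d:ℤ), star (a k) *
          ∑ j ∈ Finset.range k.toNat,
            star (u ((d:ℤ) - 1 - (j:ℤ) + k)) * v ((d:ℤ) - 1 - (j:ℤ)) := by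
  simp only [dotProduct, Matrix.mulVec, Matrix.conjTranspose_apply, Pi.star_apply,
    vecSeg, toeplitzC, apply_ite (star : ℂ → ℂ), star_zero,
    ite_mul, zero_mul, Finset.mul_sum, mul_ite, mul_zero]
  rw [← Finset.sum_product']
  rw [← Finset.sum_filter]
  rw [Finset.sum_sigma']
  refine Finset.sum_bij' (fun p hp => (⟨(d:ℤ) - (p.1 : ℕ) + (p.2 : ℕ), (p.2 : ℕ)⟩ : Σ _ : ℤ, ℕ))
    (fun q hq => ((⟨d - q.1.toNat + q.2, ?_⟩ : Fin d), (⟨q.2, ?_⟩ : Fin d))) ?_ ?_ ?_ ?_ ?_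
  · simp only [Finset.mem_sigma, Finset.mem_Icc, Finset.mem_range] at hq
    omega
  · simp only [Finset.mem_sigma, Finset.mem_Icc, Finset.mem_range] at hq
    omega
  · intro p hp
    simp only [Finset.mem_filter, Finset.mem_product] at hp
    simp only [Finset.mem_sigma, Finset.mem_Icc, Finset.mem_range]
    have h1 := p.1.isLt
    have h2 := p.2.isLt
    omega
  · intro q hq
    simp only [Finset.mem_sigma, Finset.mem_Icc, Finset.mem_range] at hq
    simp only [Finset.mem_filter, Finset.mem_product, Finset.mem_univ, true_and]
    omega
  · intro p hp
    simp only [Finset.mem_filter, Finset.mem_product] at hp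
    have h1 := p.1.isLt
    have h2 := p.2.isLt
    ext <;> simp <;> omega
  · intro q hq
    simp only [Finset.mem_sigma, Finset.mem_Icc, Finset.mem_range] at hq
    ext <;> simp <;> omega
  · intro p hp
    simp only [Finset.mem_filter, Finset.mem_product] at hp
    have h1 := p.1.isLt
    have h2 := p.2.isLt
    dsimp only
    have e1 : (1:ℤ) * d + ((d:ℤ) - 1) - (p.1 : ℕ)
        = (d:ℤ) - 1 - ((p.2:ℕ) : ℤ) + ((d:ℤ) - (p.1 : ℕ) + (p.2 : ℕ)) := by ring
    have e2 : (0:ℤ) + ((d:ℤ) - 1) - (p.2 : ℕ) = (d:ℤ) - 1 - ((p.2:ℕ) : ℤ) := by ring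
    rw [e1, e2]
    ring

end Aux

/-- symplectic orthogonality of eigenfunctions.
For the finite-range operator `(Lu)(n) = Σ_{k=-d}^d a_k u(n+k) + b(n) u(n)` with
`a_{-k} = conj (a_k)`, `a_d ≠ 0`, `b` real bounded and `E` real, any two `ℓ²`
eigenfunctions `u, v` with eigenvalue `E` satisfy
`-ū(1)* C* v̄(0) + ū(0)* C v̄(1) = 0`. -/
theorem statement3
    (d : ℕ) (hd : 1 ≤ d) (a : ℤ → ℂ)
    (haconj : ∀ k : ℤ, a (-k) = star (a k)) (had : a (d : ℤ) ≠ 0)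
    (b : ℤ → ℝ) (hb : ∃ Cb : ℝ, ∀ n : ℤ, |b n| ≤ Cb)
    (E : ℝ)
    (u v : ℤ → ℂ)
    (hu2 : Summable fun n : ℤ => ‖u n‖ ^ 2)
    (hv2 : Summable fun n : ℤ => ‖v n‖ ^ 2)
    (hLu : ∀ n : ℤ,
      (∑ k ∈ Finset.Icc (-(d:ℤ)) (d:ℤ), a k * u (n + k)) + (b n : ℂ) * u n = (E : ℂ) * u n)
    (hLv : ∀ n : ℤ,
      (∑ k ∈ Finset.Icc (-(d:ℤ)) (d:ℤ), a k * v (n + k)) + (b n : ℂ) * v n = (E : ℂ) * v n) :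
    -(star (vecSeg d u 1) ⬝ᵥ ((toeplitzC d a)ᴴ *ᵥ vecSeg d v 0))
      + (star (vecSeg d u 0) ⬝ᵥ (toeplitzC d a *ᵥ vecSeg d v 1)) = 0 := by
  rw [partB, partA]
  have hJ := Jzero d a haconj b E u v hu2 hv2 hLu hLv ((d:ℤ) - 1)
  unfold Jfun at hJ
  rw [Finset.sum_sub_distrib] at hJ
  linear_combination hJ
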